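/- (Equivalence of continuous and dyadic amalgam norms.) Let (X,d,μ) be a space of homogeneous type satisfying the standing assumptions, 1 ≤ q ≤ α ≤ p ≤ ∞, r > 0, and let m_r be the unique integer with ρ^{m_r+1} ≤ r/(2κ) < ρ^{m_r+2}. Define the dyadic norm ‖f‖^{d m_r}_{q,p,α} = ( Σ_j ( μ(E^{m_r}_j)^{1/α − 1/q} ‖f·χ_{E^{m_r}_j}‖_{L^q} )^p )^{1/p} (sup over j for p = ∞), the sum over dyadic cubes of generation m_r. Then there are constants C₁, C₂ > 0 independent of f and r such that C₁ · _r‖f‖_{q,p,α} ≤ ‖f‖^{d m_r}_{q,p,α} ≤ C₂ · _r‖f‖_{q,p,α}. -/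

import Mathlib

open MeasureTheory Set ENNReal Filter

noncomputable section

variable {X : Type*}

/-- Ball of a quasi-metric `d`, center `x`, radius `r`. -/
def qball (d : X → X → ℝ) (x : X) (r : ℝ) : Set X := {y | d x y < r}

/-- The amalgam-type quantity `_r‖f‖_{q,p,α}` (with the convention `1/∞ = 0`
given by `ENNReal.toReal`). -/
def amalgamNorm [MeasurableSpace X] (μ : Measure X) (d : X → X → ℝ)
    (q p α : ℝ≥0∞) (r : ℝ) (f : X → ℂ) : ℝ≥0∞ :=
  if p = ∞ then
    ⨆ y : X, μ (qball d y r) ^ (1 / α.toReal - 1 / q.toReal) *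
      eLpNorm ((qball d y r).indicator f) q μ
  else
    (∫⁻ y, (μ (qball d y r) ^ (1 / α.toReal - 1 / p.toReal - 1 / q.toReal) *
      eLpNorm ((qball d y r).indicator f) q μ) ^ p.toReal ∂μ) ^ (1 / p.toReal)

/-- Dyadic amalgam norm over a family of cubes `E j` of a fixed generation. -/
def dyadicAmalgamNorm [MeasurableSpace X] (μ : Measure X) {ι : Type*}
    (E : ι → Set X) (q p α : ℝ≥0∞) (f : X → ℂ) : ℝ≥0∞ :=
  if p = ∞ then
    ⨆ j : ι, μ (E j) ^ (1 / α.toReal - 1 / q.toReal) * eLpNorm ((E j).indicator f) q μ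
  else
    (∑' j : ι, (μ (E j) ^ (1 / α.toReal - 1 / q.toReal) *
      eLpNorm ((E j).indicator f) q μ) ^ p.toReal) ^ (1 / p.toReal)

lemma qball_mono (d : X → X → ℝ) (x : X) {s t : ℝ} (h : s ≤ t) :
    qball d x s ⊆ qball d x t := fun _ hy => lt_of_lt_of_le hy h

lemma comp_rpow {a b K : ℝ≥0∞} {e : ℝ} (ha : a ≠ 0) (ha' : a ≠ ∞) (hb : b ≠ 0) (hb' : b ≠ ∞)
    (hK : 1 ≤ K) (hK' : K ≠ ∞) (h1 : a ≤ K * b) (h2 : b ≤ K * a) (he : |e| ≤ 2) :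
    a ^ e ≤ K ^ 2 * b ^ e := by
  have hKe : ∀ t : ℝ, t ≤ 2 → K ^ t ≤ K ^ 2 := by
    intro t ht
    calc K ^ t ≤ K ^ (2:ℝ) := ENNReal.rpow_le_rpow_of_exponent_le hK ht
    _ = K ^ (2:ℕ) := by rw [← ENNReal.rpow_natCast]; norm_num
  rcases le_or_gt 0 e with hpos | hneg
  · calc a ^ e ≤ (K * b) ^ e := ENNReal.rpow_le_rpow h1 hpos
    _ = K ^ e * b ^ e := ENNReal.mul_rpow_of_nonneg _ _ hpos
    _ ≤ K ^ 2 * b ^ e := mul_le_mul_left (hKe e (le_trans (le_abs_self e) he)) _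
  · set t := -e with htdef
    have ht : 0 ≤ t := by simp only [htdef]; linarith
    have ht2 : t ≤ 2 := by
      have h' : |e| = t := abs_of_neg hneg
      linarith [h' ▸ he]
    have hb2 : b ^ t ≤ K ^ 2 * a ^ t := by
      calc b ^ t ≤ (K * a) ^ t := ENNReal.rpow_le_rpow h2 ht
      _ = K ^ t * a ^ t := ENNReal.mul_rpow_of_nonneg _ _ ht
      _ ≤ K ^ 2 * a ^ t := mul_le_mul_left (hKe t ht2) _
    have hK0 : (K:ℝ≥0∞) ^ 2 ≠ 0 := pow_ne_zero _ (fun h => by simp [h] at hK)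
    have hKtop : (K:ℝ≥0∞) ^ 2 ≠ ∞ := ENNReal.pow_ne_top hK'
    have hat : a ^ t ≠ 0 := by simp [ENNReal.rpow_eq_zero_iff, ha, ha']
    have hat' : a ^ t ≠ ∞ := by simp [ENNReal.rpow_eq_top_iff, ha, ha']
    have hbt : b ^ t ≠ 0 := by simp [ENNReal.rpow_eq_zero_iff, hb, hb']
    have hbt' : b ^ t ≠ ∞ := by simp [ENNReal.rpow_eq_top_iff, hb, hb']
    have hae : a ^ e = (a ^ t)⁻¹ := by rw [show e = -t by simp [htdef], ENNReal.rpow_neg]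
    have hbe : b ^ e = (b ^ t)⁻¹ := by rw [show e = -t by simp [htdef], ENNReal.rpow_neg]
    rw [hae, hbe]
    have key : (K ^ 2)⁻¹ * b ^ t ≤ a ^ t := by
      calc (K ^ 2)⁻¹ * b ^ t ≤ (K ^ 2)⁻¹ * (K ^ 2 * a ^ t) := mul_le_mul_right hb2 _
      _ = a ^ t := by rw [← mul_assoc, ENNReal.inv_mul_cancel hK0 hKtop, one_mul]
    calc (a ^ t)⁻¹ ≤ ((K ^ 2)⁻¹ * b ^ t)⁻¹ := ENNReal.inv_le_inv.mpr key
    _ = K ^ 2 * (b ^ t)⁻¹ := by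
        rw [ENNReal.mul_inv (Or.inr hbt') (Or.inr hbt), inv_inv]

lemma doubling_pow [MeasurableSpace X] (μ : Measure X) (d : X → X → ℝ) (C' : ℝ)
    (hdouble : ∀ x r, 0 < r → μ (qball d x (2 * r)) ≤ ENNReal.ofReal C' * μ (qball d x r))
    (x : X) {s : ℝ} (hs : 0 < s) (n : ℕ) :
    μ (qball d x (2 ^ n * s)) ≤ (ENNReal.ofReal C') ^ n * μ (qball d x s) := by
  induction n with
  | zero => simp
  | succ n ih =>
    have h2 : (2:ℝ) ^ (n+1) * s = 2 * (2 ^ n * s) := by ring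
    rw [h2, pow_succ]
    calc μ (qball d x (2 * (2 ^ n * s))) ≤ ENNReal.ofReal C' * μ (qball d x (2 ^ n * s)) :=
          hdouble x _ (by positivity)
    _ ≤ ENNReal.ofReal C' * ((ENNReal.ofReal C') ^ n * μ (qball d x s)) := mul_le_mul_right ih _
    _ = (ENNReal.ofReal C') ^ n * ENNReal.ofReal C' * μ (qball d x s) := by ring

lemma sum_rpow_le {ι : Type*} (s : Finset ι) (t : ι → ℝ≥0∞) {pb : ℝ} (hpb : 0 < pb) (N : ℕ)
    (hcard : s.card ≤ N) :
    (∑ j ∈ s, t j) ^ pb ≤ (N : ℝ≥0∞) ^ pb * ∑ j ∈ s, (t j) ^ pb := by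
  rcases s.eq_empty_or_nonempty with rfl | hne
  · simp [ENNReal.zero_rpow_of_pos hpb]
  · obtain ⟨j₀, hj₀, hmax⟩ := s.exists_max_image t hne
    calc (∑ j ∈ s, t j) ^ pb ≤ ((N : ℝ≥0∞) * t j₀) ^ pb := by
          apply ENNReal.rpow_le_rpow _ hpb.le
          calc ∑ j ∈ s, t j ≤ ∑ _j ∈ s, t j₀ := Finset.sum_le_sum (fun j hj => hmax j hj)
          _ = (s.card : ℝ≥0∞) * t j₀ := by simp [mul_comm]
          _ ≤ (N : ℝ≥0∞) * t j₀ := by gcongr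
    _ = (N : ℝ≥0∞) ^ pb * (t j₀) ^ pb := ENNReal.mul_rpow_of_nonneg _ _ hpb.le
    _ ≤ (N : ℝ≥0∞) ^ pb * ∑ j ∈ s, (t j) ^ pb := by
        gcongr
        exact Finset.single_le_sum (f := fun j => t j ^ pb) (fun i _ => zero_le) hj₀

lemma eLpNorm_indicator_mono [MeasurableSpace X] (μ : Measure X) (q : ℝ≥0∞) (f : X → ℂ)
    {A B : Set X} (hAB : A ⊆ B) :
    eLpNorm (A.indicator f) q μ ≤ eLpNorm (B.indicator f) q μ := by
  apply eLpNorm_mono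
  intro x
  by_cases hx : x ∈ A
  · simp [Set.indicator_of_mem, hx, hAB hx]
  · simp [Set.indicator_of_notMem hx]


set_option maxHeartbeats 3000000 in
/-- equivalence of the continuous amalgam norm `_r‖·‖_{q,p,α}` and the
dyadic amalgam norm at generation `m_r`, with constants independent of `f` and `r`. -/
theorem amalgam_dyadic_equivalence [MeasurableSpace X] (μ : Measure X) (d : X → X → ℝ)
    (κ : ℝ) (hκ : 1 ≤ κ)
    (hsymm : ∀ x y, d x y = d y x) (hd0 : ∀ x, d x x = 0) (hdnn : ∀ x y, 0 ≤ d x y)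
    (htri : ∀ x y z, d x y ≤ κ * (d x z + d z y))
    (hmeas : ∀ x r, MeasurableSet (qball d x r))
    (hpos : ∀ x r, 0 < r → 0 < μ (qball d x r))
    (hfin : ∀ x r, μ (qball d x r) < ∞)
    (hXinf : μ Set.univ = ∞)
    (C' : ℝ) (hC' : 1 < C')
    (hdouble : ∀ x r, 0 < r → μ (qball d x (2 * r)) ≤ ENNReal.ofReal C' * μ (qball d x r))
    (ρ : ℝ) (hρ : 1 < ρ)
    (q p α : ℝ≥0∞) (hq : 1 ≤ q) (hqα : q ≤ α) (hαp : α ≤ p) :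
    ∃ C₁ C₂ : ℝ, 0 < C₁ ∧ 0 < C₂ ∧
      ∀ (r : ℝ), 0 < r → ∀ (m : ℤ),
        ρ ^ (m + 1) ≤ r / (2 * κ) → r / (2 * κ) < ρ ^ (m + 2) →
      ∀ (ι : Type) (_ : Countable ι) (c : ι → X) (E : ι → Set X),
        (∀ j, MeasurableSet (E j)) →
        (∀ j, qball d (c j) (ρ ^ m) ⊆ E j ∧ E j ⊆ qball d (c j) (ρ ^ (m + 1))) →
        Pairwise (Function.onFun Disjoint E) →
        (⋃ j, E j) = Set.univ →
      ∀ (f : X → ℂ), Measurable f →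
        ENNReal.ofReal C₁ * amalgamNorm μ d q p α r f ≤ dyadicAmalgamNorm μ E q p α f ∧
        dyadicAmalgamNorm μ E q p α f ≤ ENNReal.ofReal C₂ * amalgamNorm μ d q p α r f := by
  have hκ0 : (0:ℝ) < κ := lt_of_lt_of_le zero_lt_one hκ
  have hρ0 : (0:ℝ) < ρ := lt_trans zero_lt_one hρ
  have hC'0 : (0:ℝ) < C' := lt_trans zero_lt_one hC'
  -- choose L with 10 κ^4 ρ^2 ≤ 2^L
  obtain ⟨L, hL⟩ : ∃ L : ℕ, 10 * κ ^ 4 * ρ ^ 2 ≤ 2 ^ L := by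
    obtain ⟨L, hL⟩ := pow_unbounded_of_one_lt (10 * κ ^ 4 * ρ ^ 2) (by norm_num : (1:ℝ) < 2)
    exact ⟨L, hL.le⟩
  set K : ℝ≥0∞ := (ENNReal.ofReal C') ^ L with hKdef
  have hK1 : 1 ≤ K := one_le_pow_of_one_le' (ENNReal.one_le_ofReal.mpr hC'.le) L
  have hKtop : K ≠ ∞ := ENNReal.pow_ne_top ENNReal.ofReal_ne_top
  set N : ℕ := ⌈C' ^ L⌉₊ with hNdef
  have hKN : K ≤ (N : ℝ≥0∞) := by
    rw [hKdef, ← ENNReal.ofReal_pow hC'0.le]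
    calc ENNReal.ofReal (C' ^ L) ≤ ENNReal.ofReal (N : ℝ) :=
          ENNReal.ofReal_le_ofReal (Nat.le_ceil _)
    _ = (N : ℝ≥0∞) := ENNReal.ofReal_natCast N
  have hN1 : 1 ≤ N := Nat.one_le_ceil_iff.mpr (by positivity)
  refine ⟨(N * C' ^ (3 * L))⁻¹, C' ^ (2 * L), by positivity, by positivity, ?_⟩
  intro r hr m hm1 hm2 ι hι c E hEmeas hEsub hEdisj hEcover f hf
  have hρm : (0:ℝ) < ρ ^ m := zpow_pos hρ0 m
  have h2κ : (1:ℝ) ≤ 2 * κ := by linarith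
  have h2κ0 : (0:ℝ) < 2 * κ := by linarith
  have hrle : 2 * κ * ρ ^ (m+1) ≤ r := by
    have := (le_div_iff₀ h2κ0).mp hm1; linarith
  have hrlt : r < 2 * κ * ρ ^ (m+2) := by
    have := (div_lt_iff₀ h2κ0).mp hm2; linarith
  have hρm2 : ρ ^ (m+2) = ρ ^ m * ρ ^ 2 := by
    rw [zpow_add₀ hρ0.ne', show ((2:ℤ) = ((2:ℕ):ℤ)) from rfl, zpow_natCast]
  have hρm1r : ρ ^ (m+1) ≤ r := hm1.trans (div_le_self hr.le h2κ)
  have hρmr : ρ ^ m ≤ r := by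
    have h1 : ρ ^ (m+1) = ρ ^ m * ρ := by
      rw [zpow_add₀ hρ0.ne', zpow_one]
    nlinarith [mul_le_mul_of_nonneg_left hρ.le hρm.le]
  have hκ2 : (1:ℝ) ≤ κ ^ 2 := by nlinarith
  have hρ2 : (1:ℝ) ≤ ρ ^ 2 := by nlinarith
  have hrρ : r ≤ 2 * κ * (ρ ^ m * ρ ^ 2) := by rw [← hρm2]; exact hrlt.le
  -- basic real bounds
  have hb1 : 3 * κ^2 * r ≤ 2 ^ L * ρ ^ m := by
    have s1 : 3 * κ^2 * r ≤ 3 * κ^2 * (2 * κ * (ρ ^ m * ρ ^ 2)) :=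
      mul_le_mul_of_nonneg_left hrρ (by positivity)
    have s2 : 3 * κ^2 * (2 * κ * (ρ ^ m * ρ ^ 2)) = (6 * κ^3 * ρ^2) * ρ ^ m := by ring
    have s3 : (6 * κ^3 * ρ^2) ≤ 10 * κ^4 * ρ^2 := by
      nlinarith [mul_nonneg (show (0:ℝ) ≤ κ^3*ρ^2 by positivity) (show (0:ℝ) ≤ 10*κ-6 by linarith)]
    have s4 : (6 * κ^3 * ρ^2) * ρ ^ m ≤ 2 ^ L * ρ ^ m :=
      mul_le_mul_of_nonneg_right (s3.trans hL) hρm.le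
    linarith
  have hb3 : 5 * κ^3 * r ≤ 2 ^ L * ρ ^ m := by
    have s1 : 5 * κ^3 * r ≤ 5 * κ^3 * (2 * κ * (ρ ^ m * ρ ^ 2)) :=
      mul_le_mul_of_nonneg_left hrρ (by positivity)
    have s2 : 5 * κ^3 * (2 * κ * (ρ ^ m * ρ ^ 2)) = (10 * κ^4 * ρ^2) * ρ ^ m := by ring
    have s4 : (10 * κ^4 * ρ^2) * ρ ^ m ≤ 2 ^ L * ρ ^ m :=
      mul_le_mul_of_nonneg_right hL hρm.le
    linarith
  have hb4 : 2 * κ * r ≤ 2 ^ L * ρ ^ m := by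
    have s0 : 2 * κ * r ≤ 5 * κ^3 * r := by
      nlinarith [mul_nonneg (mul_nonneg hκ0.le hr.le) (show (0:ℝ) ≤ 5*κ^2-2 by nlinarith)]
    linarith
  have hb2 : 3 * κ^2 * r ≤ 2 ^ L * r := by
    have t1 : (1:ℝ) * 1 ≤ κ^2 * ρ^2 := mul_le_mul hκ2 hρ2 zero_le_one (by positivity)
    have s3 : 3 * κ^2 ≤ 10 * κ^4 * ρ^2 := by
      nlinarith [mul_nonneg (show (0:ℝ) ≤ κ^2 by positivity)
        (show (0:ℝ) ≤ 10*(κ^2*ρ^2)-3 by linarith)]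
    exact mul_le_mul_of_nonneg_right (s3.trans hL) hr.le
  have hκalg : ∀ s : ℝ, s ≤ r → κ * (2 * κ * r + s) ≤ 3 * κ^2 * r := by
    intro s hs
    nlinarith [mul_nonneg (mul_nonneg hκ0.le hr.le) (show (0:ℝ) ≤ κ - 1 by linarith),
      mul_nonneg hκ0.le (show (0:ℝ) ≤ r - s by linarith)]
  have hKball : ∀ (x : X) (s t : ℝ), 0 < s → t ≤ 2 ^ L * s →
      μ (qball d x t) ≤ K * μ (qball d x s) := by
    intro x s t hs hts
    calc μ (qball d x t) ≤ μ (qball d x (2 ^ L * s)) := measure_mono (qball_mono d x hts)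
    _ ≤ K * μ (qball d x s) := doubling_pow μ d C' hdouble x hs L
  have hmemq : ∀ (y : X) (s : ℝ), 0 < s → y ∈ qball d y s := by
    intro y s hs; simpa [qball, hd0] using hs
  have hcjE : ∀ j, c j ∈ E j := fun j => (hEsub j).1 (hmemq _ _ hρm)
  have hν0 : ∀ j, μ (E j) ≠ 0 :=
    fun j => (lt_of_lt_of_le (hpos _ _ hρm) (measure_mono (hEsub j).1)).ne'
  have hνtop : ∀ j, μ (E j) ≠ ∞ :=
    fun j => (lt_of_le_of_lt (measure_mono (hEsub j).2) (hfin _ _)).ne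
  set J : X → Set ι := fun y => {j | (E j ∩ qball d y r).Nonempty} with hJdef
  have hmemJ : ∀ j (y : X), y ∈ E j → j ∈ J y := fun j y hy => ⟨y, hy, hmemq y r hr⟩
  have hdc : ∀ (y : X) (j : ι), j ∈ J y → d (c j) y < 2 * κ * r := by
    rintro y j ⟨z, hzE, hzB⟩
    have h1 : d (c j) z < ρ ^ (m+1) := (hEsub j).2 hzE
    have h2 : d z y < r := by rw [hsymm]; exact hzB
    calc d (c j) y ≤ κ * (d (c j) z + d z y) := htri _ _ _
    _ < κ * (ρ ^ (m+1) + r) := by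
        apply mul_lt_mul_of_pos_left _ hκ0; linarith
    _ ≤ κ * (r + r) := by
        apply mul_le_mul_of_nonneg_left _ hκ0.le; linarith
    _ = 2 * κ * r := by ring
  -- P1 : cubes are inside balls centered at their points
  have hP1 : ∀ (j : ι), ∀ y ∈ E j, E j ⊆ qball d y r := by
    intro j y hy w hw
    have h1 : d (c j) y < ρ ^ (m+1) := (hEsub j).2 hy
    have h2 : d (c j) w < ρ ^ (m+1) := (hEsub j).2 hw
    show d y w < r
    calc d y w ≤ κ * (d y (c j) + d (c j) w) := htri _ _ _
    _ = κ * (d (c j) y + d (c j) w) := by rw [hsymm y (c j)]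
    _ < κ * (ρ ^ (m+1) + ρ ^ (m+1)) := by
        apply mul_lt_mul_of_pos_left _ hκ0; linarith
    _ = 2 * κ * ρ ^ (m+1) := by ring
    _ ≤ r := hrle
  -- P3 : μ(B(y,r)) ≤ K ν j for j ∈ J y
  have hsub3 : ∀ (y : X) (j : ι), j ∈ J y → qball d y r ⊆ qball d (c j) (3 * κ^2 * r) := by
    intro y j hj w hw
    have h1 : d (c j) y < 2 * κ * r := hdc y j hj
    have h2 : d y w < r := hw
    show d (c j) w < 3 * κ^2 * r
    calc d (c j) w ≤ κ * (d (c j) y + d y w) := htri _ _ _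
    _ < κ * (2 * κ * r + r) := by apply mul_lt_mul_of_pos_left _ hκ0; linarith
    _ ≤ 3 * κ^2 * r := hκalg r le_rfl
  have hP3 : ∀ (y : X) (j : ι), j ∈ J y → μ (qball d y r) ≤ K * μ (E j) := by
    intro y j hj
    calc μ (qball d y r) ≤ μ (qball d (c j) (3 * κ^2 * r)) := measure_mono (hsub3 y j hj)
    _ ≤ K * μ (qball d (c j) (ρ ^ m)) := hKball _ _ _ hρm hb1
    _ ≤ K * μ (E j) := mul_le_mul_right (measure_mono (hEsub j).1) _
  -- P4 : ν j ≤ K μ(B(y,r)) for j ∈ J y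
  have hP4 : ∀ (y : X) (j : ι), j ∈ J y → μ (E j) ≤ K * μ (qball d y r) := by
    intro y j hj
    have hsub : E j ⊆ qball d y (3 * κ^2 * r) := by
      intro w hw
      have h1 : d (c j) y < 2 * κ * r := hdc y j hj
      have h2 : d (c j) w < ρ ^ (m+1) := (hEsub j).2 hw
      show d y w < 3 * κ^2 * r
      calc d y w ≤ κ * (d y (c j) + d (c j) w) := htri _ _ _
      _ = κ * (d (c j) y + d (c j) w) := by rw [hsymm y (c j)]
      _ < κ * (2 * κ * r + ρ ^ (m+1)) := by apply mul_lt_mul_of_pos_left _ hκ0; linarith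
      _ ≤ 3 * κ^2 * r := hκalg _ hρm1r
    calc μ (E j) ≤ μ (qball d y (3 * κ^2 * r)) := measure_mono hsub
    _ ≤ K * μ (qball d y r) := hKball _ _ _ hr hb2
  -- T j : measurable superset of {y | j ∈ J y}
  have hT : ∀ j : ι, μ (qball d (c j) (2 * κ * r)) ≤ K * μ (E j) := by
    intro j
    calc μ (qball d (c j) (2 * κ * r)) ≤ K * μ (qball d (c j) (ρ ^ m)) :=
          hKball _ _ _ hρm hb4
    _ ≤ K * μ (E j) := mul_le_mul_right (measure_mono (hEsub j).1) _
  -- cardinality of J y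
  have hcard : ∀ (y : X) (S : Finset ι), ↑S ⊆ J y → S.card ≤ N := by
    intro y S hS
    have hbig : ∀ j ∈ S, μ (qball d y (3 * κ^2 * r)) ≤ K * μ (qball d (c j) (ρ ^ m)) := by
      intro j hj
      have hsub : qball d y (3 * κ^2 * r) ⊆ qball d (c j) (5 * κ^3 * r) := by
        intro w hw
        have h1 : d (c j) y < 2 * κ * r := hdc y j (hS hj)
        have h2 : d y w < 3 * κ^2 * r := hw
        show d (c j) w < 5 * κ^3 * r
        calc d (c j) w ≤ κ * (d (c j) y + d y w) := htri _ _ _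
        _ < κ * (2 * κ * r + 3 * κ^2 * r) := by apply mul_lt_mul_of_pos_left _ hκ0; linarith
        _ ≤ 5 * κ^3 * r := by
            nlinarith [mul_nonneg (mul_nonneg hκ0.le hr.le) (show (0:ℝ) ≤ κ^2 - 1 by linarith),
              mul_nonneg (mul_nonneg (mul_nonneg hκ0.le hκ0.le) hr.le) (show (0:ℝ) ≤ κ - 1 by linarith)]
      calc μ (qball d y (3 * κ^2 * r)) ≤ μ (qball d (c j) (5 * κ^3 * r)) := measure_mono hsub
      _ ≤ K * μ (qball d (c j) (ρ ^ m)) := hKball _ _ _ hρm hb3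
    have hdisjballs : (↑S : Set ι).PairwiseDisjoint (fun j => qball d (c j) (ρ ^ m)) := by
      intro i _ j _ hij
      exact Disjoint.mono (hEsub i).1 (hEsub j).1 (hEdisj hij)
    have hsum : ∑ j ∈ S, μ (qball d (c j) (ρ ^ m)) ≤ μ (qball d y (3 * κ^2 * r)) := by
      rw [← measure_biUnion_finset hdisjballs (fun j _ => hmeas _ _)]
      apply measure_mono
      apply Set.iUnion₂_subset
      intro j hj w hw
      have h1 : d (c j) y < 2 * κ * r := hdc y j (hS hj)
      have h2 : d (c j) w < ρ ^ m := hw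
      show d y w < 3 * κ^2 * r
      calc d y w ≤ κ * (d y (c j) + d (c j) w) := htri _ _ _
      _ = κ * (d (c j) y + d (c j) w) := by rw [hsymm y (c j)]
      _ < κ * (2 * κ * r + ρ ^ m) := by apply mul_lt_mul_of_pos_left _ hκ0; linarith
      _ ≤ 3 * κ^2 * r := hκalg _ hρmr
    have hcount : (S.card : ℝ≥0∞) * μ (qball d y (3 * κ^2 * r)) ≤
        K * μ (qball d y (3 * κ^2 * r)) := by
      calc (S.card : ℝ≥0∞) * μ (qball d y (3 * κ^2 * r))
          = ∑ _j ∈ S, μ (qball d y (3 * κ^2 * r)) := by simp [mul_comm]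
      _ ≤ ∑ j ∈ S, K * μ (qball d (c j) (ρ ^ m)) := Finset.sum_le_sum hbig
      _ = K * ∑ j ∈ S, μ (qball d (c j) (ρ ^ m)) := by rw [Finset.mul_sum]
      _ ≤ K * μ (qball d y (3 * κ^2 * r)) := mul_le_mul_right hsum _
    have hμB : μ (qball d y (3 * κ^2 * r)) ≠ 0 := (hpos _ _ (by positivity)).ne'
    have hμB' : μ (qball d y (3 * κ^2 * r)) ≠ ∞ := (hfin _ _).ne
    have hfin' : (S.card : ℝ≥0∞) ≤ K := (ENNReal.mul_le_mul_iff_left hμB hμB').mp hcount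
    exact_mod_cast hfin'.trans hKN
  have hJfin : ∀ y : X, (J y).Finite := by
    intro y
    by_contra hinf
    obtain ⟨S, hSsub, hScard⟩ := Set.Infinite.exists_subset_card_eq hinf (N+1)
    have := hcard y S hSsub
    omega
  -- norms
  have hp1 : (1:ℝ≥0∞) ≤ p := hq.trans (hqα.trans hαp)
  have hα1' : (1:ℝ≥0∞) ≤ α := hq.trans hqα
  have hdecomp : ∀ y : X, eLpNorm ((qball d y r).indicator f) q μ ≤
      ∑ j ∈ (hJfin y).toFinset, eLpNorm ((E j).indicator f) q μ := by
    intro y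
    have heq : (qball d y r).indicator f =
        ∑ j ∈ (hJfin y).toFinset, (E j ∩ qball d y r).indicator f := by
      funext x
      rw [Finset.sum_apply]
      by_cases hx : x ∈ qball d y r
      · have hxU : x ∈ ⋃ j, E j := hEcover ▸ Set.mem_univ x
        obtain ⟨j₀, hj₀⟩ := Set.mem_iUnion.mp hxU
        have hj₀J : j₀ ∈ (hJfin y).toFinset := (Set.Finite.mem_toFinset _).mpr ⟨x, hj₀, hx⟩
        have hz : ∀ i ∈ (hJfin y).toFinset, i ≠ j₀ →
            (E i ∩ qball d y r).indicator f x = 0 := by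
          intro i _ hij
          apply Set.indicator_of_notMem
          rintro ⟨hxE, -⟩
          exact Set.disjoint_left.mp (hEdisj hij) hxE hj₀
        rw [Set.indicator_of_mem hx, Finset.sum_eq_single_of_mem j₀ hj₀J hz]
        exact (Set.indicator_of_mem (Set.mem_inter hj₀ hx) f).symm
      · rw [Set.indicator_of_notMem hx]
        symm; apply Finset.sum_eq_zero; intro i _
        exact Set.indicator_of_notMem (fun h => hx h.2) f
    calc eLpNorm ((qball d y r).indicator f) q μ
        = eLpNorm (∑ j ∈ (hJfin y).toFinset, (E j ∩ qball d y r).indicator f) q μ := by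
          rw [heq]
    _ ≤ ∑ j ∈ (hJfin y).toFinset, eLpNorm ((E j ∩ qball d y r).indicator f) q μ :=
        eLpNorm_sum_le
          (fun i _ => (hf.indicator ((hEmeas i).inter (hmeas y r))).aestronglyMeasurable) hq
    _ ≤ ∑ j ∈ (hJfin y).toFinset, eLpNorm ((E j).indicator f) q μ :=
        Finset.sum_le_sum (fun i _ => eLpNorm_indicator_mono μ q f Set.inter_subset_left)
  -- exponents
  have honeinv : ∀ x : ℝ≥0∞, 1 ≤ x → 0 ≤ 1 / x.toReal ∧ 1 / x.toReal ≤ 1 := by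
    intro x hx
    rcases eq_or_ne x ∞ with rfl | hx'
    · simp
    · have h1 : (1:ℝ) ≤ x.toReal := by
        rw [← ENNReal.toReal_one]; exact ENNReal.toReal_mono hx' hx
      exact ⟨by positivity, by rw [div_le_one (by linarith)]; exact h1⟩
  obtain ⟨hα0, hα1⟩ := honeinv α hα1'
  obtain ⟨hq0, hq1'⟩ := honeinv q hq
  obtain ⟨hp0, hp1'⟩ := honeinv p hp1
  have he' : |1 / α.toReal - 1 / q.toReal| ≤ 2 := abs_le.mpr ⟨by linarith, by linarith⟩
  have he : |1 / α.toReal - 1 / p.toReal - 1 / q.toReal| ≤ 2 :=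
    abs_le.mpr ⟨by linarith, by linarith⟩
  have hcomp : ∀ (y : X) (j : ι), j ∈ J y → ∀ t : ℝ, |t| ≤ 2 →
      μ (qball d y r) ^ t ≤ K^2 * μ (E j) ^ t ∧ μ (E j) ^ t ≤ K^2 * μ (qball d y r) ^ t := by
    intro y j hj t ht
    exact ⟨comp_rpow (hpos y r hr).ne' (hfin y r).ne (hν0 j) (hνtop j) hK1 hKtop
        (hP3 y j hj) (hP4 y j hj) ht,
      comp_rpow (hν0 j) (hνtop j) (hpos y r hr).ne' (hfin y r).ne hK1 hKtop
        (hP4 y j hj) (hP3 y j hj) ht⟩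
  -- the two main estimates
  have main2 : dyadicAmalgamNorm μ E q p α f ≤ K^2 * amalgamNorm μ d q p α r f := by
    by_cases hp : p = ∞
    · simp only [dyadicAmalgamNorm, amalgamNorm, if_pos hp]
      apply iSup_le
      intro j
      have hjJ : j ∈ J (c j) := hmemJ j (c j) (hcjE j)
      calc μ (E j) ^ (1 / α.toReal - 1 / q.toReal) * eLpNorm ((E j).indicator f) q μ
          ≤ (K^2 * μ (qball d (c j) r) ^ (1 / α.toReal - 1 / q.toReal)) *
            eLpNorm ((qball d (c j) r).indicator f) q μ :=
            mul_le_mul' (hcomp (c j) j hjJ _ he').2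
              (eLpNorm_indicator_mono μ q f (hP1 j (c j) (hcjE j)))
      _ = K^2 * (μ (qball d (c j) r) ^ (1 / α.toReal - 1 / q.toReal) *
            eLpNorm ((qball d (c j) r).indicator f) q μ) := by ring
      _ ≤ K^2 * ⨆ y : X, μ (qball d y r) ^ (1 / α.toReal - 1 / q.toReal) *
            eLpNorm ((qball d y r).indicator f) q μ := by
          apply mul_le_mul_right
          exact le_iSup (fun y : X => μ (qball d y r) ^ (1 / α.toReal - 1 / q.toReal) *
            eLpNorm ((qball d y r).indicator f) q μ) (c j)
    · have hpb1 : (1:ℝ) ≤ p.toReal := by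
        rw [← ENNReal.toReal_one]; exact ENNReal.toReal_mono hp hp1
      have hpb0 : (0:ℝ) < p.toReal := by linarith
      simp only [dyadicAmalgamNorm, amalgamNorm, if_neg hp]
      have hperj : ∀ j : ι,
          (μ (E j) ^ (1 / α.toReal - 1 / p.toReal - 1 / q.toReal) *
            eLpNorm ((E j).indicator f) q μ) ^ p.toReal * μ (E j) =
          (μ (E j) ^ (1 / α.toReal - 1 / q.toReal) *
            eLpNorm ((E j).indicator f) q μ) ^ p.toReal := by
        intro j
        rw [ENNReal.mul_rpow_of_nonneg _ _ hpb0.le, ENNReal.mul_rpow_of_nonneg _ _ hpb0.le,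
          ← ENNReal.rpow_mul, ← ENNReal.rpow_mul]
        have harith : (1 / α.toReal - 1 / q.toReal) * p.toReal =
            (1 / α.toReal - 1 / p.toReal - 1 / q.toReal) * p.toReal + 1 := by
          field_simp
          ring
        rw [harith, ENNReal.rpow_add _ _ (hν0 j) (hνtop j), ENNReal.rpow_one]
        ring
      have hident : ∑' j : ι, (μ (E j) ^ (1 / α.toReal - 1 / q.toReal) *
            eLpNorm ((E j).indicator f) q μ) ^ p.toReal =
          ∫⁻ y, (∑' j : ι, (E j).indicator
            (fun _ => (μ (E j) ^ (1 / α.toReal - 1 / p.toReal - 1 / q.toReal) *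
              eLpNorm ((E j).indicator f) q μ) ^ p.toReal) y) ∂μ := by
        rw [lintegral_tsum (fun j => (measurable_const.indicator (hEmeas j)).aemeasurable)]
        congr 1
        funext j
        rw [lintegral_indicator_const (hEmeas j), hperj j]
      have hpt : ∀ y : X, (∑' j : ι, (E j).indicator
            (fun _ => (μ (E j) ^ (1 / α.toReal - 1 / p.toReal - 1 / q.toReal) *
              eLpNorm ((E j).indicator f) q μ) ^ p.toReal) y) ≤
          (K^2) ^ p.toReal * ((μ (qball d y r) ^ (1 / α.toReal - 1 / p.toReal - 1 / q.toReal) *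
            eLpNorm ((qball d y r).indicator f) q μ) ^ p.toReal) := by
        intro y
        obtain ⟨j₀, hj₀⟩ := Set.mem_iUnion.mp (hEcover ▸ Set.mem_univ y)
        rw [tsum_eq_single j₀ ?_]
        · rw [Set.indicator_of_mem hj₀]
          calc (μ (E j₀) ^ (1 / α.toReal - 1 / p.toReal - 1 / q.toReal) *
                eLpNorm ((E j₀).indicator f) q μ) ^ p.toReal
              ≤ (K^2 * (μ (qball d y r) ^ (1 / α.toReal - 1 / p.toReal - 1 / q.toReal) *
                eLpNorm ((qball d y r).indicator f) q μ)) ^ p.toReal := by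
                apply ENNReal.rpow_le_rpow _ hpb0.le
                calc μ (E j₀) ^ (1 / α.toReal - 1 / p.toReal - 1 / q.toReal) *
                    eLpNorm ((E j₀).indicator f) q μ
                    ≤ (K^2 * μ (qball d y r) ^ (1 / α.toReal - 1 / p.toReal - 1 / q.toReal)) *
                      eLpNorm ((qball d y r).indicator f) q μ :=
                      mul_le_mul' (hcomp y j₀ (hmemJ j₀ y hj₀) _ he).2
                        (eLpNorm_indicator_mono μ q f (hP1 j₀ y hj₀))
                _ = K^2 * (μ (qball d y r) ^ (1 / α.toReal - 1 / p.toReal - 1 / q.toReal) *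
                      eLpNorm ((qball d y r).indicator f) q μ) := by ring
          _ = (K^2) ^ p.toReal * ((μ (qball d y r) ^ (1 / α.toReal - 1 / p.toReal - 1 / q.toReal) *
                eLpNorm ((qball d y r).indicator f) q μ) ^ p.toReal) :=
              ENNReal.mul_rpow_of_nonneg _ _ hpb0.le
        · intro i hij
          apply Set.indicator_of_notMem
          exact fun h => Set.disjoint_left.mp (hEdisj hij) h hj₀
      calc (∑' j : ι, (μ (E j) ^ (1 / α.toReal - 1 / q.toReal) *
            eLpNorm ((E j).indicator f) q μ) ^ p.toReal) ^ (1 / p.toReal)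
          ≤ (∫⁻ y, (K^2) ^ p.toReal *
              ((μ (qball d y r) ^ (1 / α.toReal - 1 / p.toReal - 1 / q.toReal) *
              eLpNorm ((qball d y r).indicator f) q μ) ^ p.toReal) ∂μ) ^ (1 / p.toReal) := by
            rw [hident]
            exact ENNReal.rpow_le_rpow (lintegral_mono hpt) (by positivity)
      _ = ((K^2) ^ p.toReal * ∫⁻ y,
              ((μ (qball d y r) ^ (1 / α.toReal - 1 / p.toReal - 1 / q.toReal) *
              eLpNorm ((qball d y r).indicator f) q μ) ^ p.toReal) ∂μ) ^ (1 / p.toReal) := by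
            rw [lintegral_const_mul' _ _ (by
              exact ENNReal.rpow_ne_top_of_nonneg hpb0.le (ENNReal.pow_ne_top hKtop))]
      _ = ((K^2) ^ p.toReal) ^ (1 / p.toReal) * (∫⁻ y,
              ((μ (qball d y r) ^ (1 / α.toReal - 1 / p.toReal - 1 / q.toReal) *
              eLpNorm ((qball d y r).indicator f) q μ) ^ p.toReal) ∂μ) ^ (1 / p.toReal) :=
            ENNReal.mul_rpow_of_nonneg _ _ (by positivity)
      _ = K^2 * (∫⁻ y,
              ((μ (qball d y r) ^ (1 / α.toReal - 1 / p.toReal - 1 / q.toReal) *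
              eLpNorm ((qball d y r).indicator f) q μ) ^ p.toReal) ∂μ) ^ (1 / p.toReal) := by
            rw [← ENNReal.rpow_mul, mul_one_div_cancel hpb0.ne', ENNReal.rpow_one]
  have main1 : amalgamNorm μ d q p α r f ≤
      (N : ℝ≥0∞) * (K^2 * K) * dyadicAmalgamNorm μ E q p α f := by
    by_cases hp : p = ∞
    · simp only [amalgamNorm, dyadicAmalgamNorm, if_pos hp]
      apply iSup_le
      intro y
      have hsubJ : ↑(hJfin y).toFinset ⊆ J y := by
        rw [Set.Finite.coe_toFinset]
      calc μ (qball d y r) ^ (1 / α.toReal - 1 / q.toReal) *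
            eLpNorm ((qball d y r).indicator f) q μ
          ≤ μ (qball d y r) ^ (1 / α.toReal - 1 / q.toReal) *
            ∑ j ∈ (hJfin y).toFinset, eLpNorm ((E j).indicator f) q μ :=
            mul_le_mul_right (hdecomp y) _
      _ = ∑ j ∈ (hJfin y).toFinset, μ (qball d y r) ^ (1 / α.toReal - 1 / q.toReal) *
            eLpNorm ((E j).indicator f) q μ := Finset.mul_sum _ _ _
      _ ≤ ∑ j ∈ (hJfin y).toFinset, K^2 *
            (μ (E j) ^ (1 / α.toReal - 1 / q.toReal) * eLpNorm ((E j).indicator f) q μ) := by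
          apply Finset.sum_le_sum
          intro j hj
          have hjJ : j ∈ J y := hsubJ hj
          calc μ (qball d y r) ^ (1 / α.toReal - 1 / q.toReal) *
                eLpNorm ((E j).indicator f) q μ
              ≤ (K^2 * μ (E j) ^ (1 / α.toReal - 1 / q.toReal)) *
                eLpNorm ((E j).indicator f) q μ :=
              mul_le_mul_left (hcomp y j hjJ _ he').1 _
          _ = K^2 * (μ (E j) ^ (1 / α.toReal - 1 / q.toReal) *
                eLpNorm ((E j).indicator f) q μ) := by ring
      _ ≤ ∑ _j ∈ (hJfin y).toFinset, K^2 * (⨆ i : ι, μ (E i) ^ (1 / α.toReal - 1 / q.toReal) *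
            eLpNorm ((E i).indicator f) q μ) := by
          apply Finset.sum_le_sum
          intro j _
          exact mul_le_mul_right (le_iSup (fun i : ι => μ (E i) ^ (1 / α.toReal - 1 / q.toReal) *
            eLpNorm ((E i).indicator f) q μ) j) _
      _ = ((hJfin y).toFinset.card : ℝ≥0∞) *
            (K^2 * ⨆ i : ι, μ (E i) ^ (1 / α.toReal - 1 / q.toReal) *
              eLpNorm ((E i).indicator f) q μ) := by
          rw [Finset.sum_const, nsmul_eq_mul]
      _ ≤ (N : ℝ≥0∞) * (K^2 * ⨆ i : ι, μ (E i) ^ (1 / α.toReal - 1 / q.toReal) *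
              eLpNorm ((E i).indicator f) q μ) := by
          gcongr
          exact_mod_cast hcard y _ hsubJ
      _ ≤ (N : ℝ≥0∞) * (K^2 * K) * (⨆ i : ι, μ (E i) ^ (1 / α.toReal - 1 / q.toReal) *
              eLpNorm ((E i).indicator f) q μ) := by
          rw [mul_assoc]
          apply mul_le_mul_right
          apply mul_le_mul_left
          exact le_mul_of_one_le_right (zero_le) hK1
    · have hpb1 : (1:ℝ) ≤ p.toReal := by
        rw [← ENNReal.toReal_one]; exact ENNReal.toReal_mono hp hp1
      have hpb0 : (0:ℝ) < p.toReal := by linarith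
      simp only [amalgamNorm, dyadicAmalgamNorm, if_neg hp]
      have hperj : ∀ j : ι,
          (μ (E j) ^ (1 / α.toReal - 1 / p.toReal - 1 / q.toReal) *
            eLpNorm ((E j).indicator f) q μ) ^ p.toReal * μ (E j) =
          (μ (E j) ^ (1 / α.toReal - 1 / q.toReal) *
            eLpNorm ((E j).indicator f) q μ) ^ p.toReal := by
        intro j
        rw [ENNReal.mul_rpow_of_nonneg _ _ hpb0.le, ENNReal.mul_rpow_of_nonneg _ _ hpb0.le,
          ← ENNReal.rpow_mul, ← ENNReal.rpow_mul]
        have harith : (1 / α.toReal - 1 / q.toReal) * p.toReal =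
            (1 / α.toReal - 1 / p.toReal - 1 / q.toReal) * p.toReal + 1 := by
          field_simp
          ring
        rw [harith, ENNReal.rpow_add _ _ (hν0 j) (hνtop j), ENNReal.rpow_one]
        ring
      -- pointwise bound for the integrand
      have hptA : ∀ y : X,
          (μ (qball d y r) ^ (1 / α.toReal - 1 / p.toReal - 1 / q.toReal) *
            eLpNorm ((qball d y r).indicator f) q μ) ^ p.toReal ≤
          ((N : ℝ≥0∞) * K^2) ^ p.toReal *
            ∑' j : ι, (qball d (c j) (2 * κ * r)).indicator
              (fun _ => (μ (E j) ^ (1 / α.toReal - 1 / p.toReal - 1 / q.toReal) *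
                eLpNorm ((E j).indicator f) q μ) ^ p.toReal) y := by
        intro y
        have hsubJ : ↑(hJfin y).toFinset ⊆ J y := by
          rw [Set.Finite.coe_toFinset]
        have step1 : μ (qball d y r) ^ (1 / α.toReal - 1 / p.toReal - 1 / q.toReal) *
              eLpNorm ((qball d y r).indicator f) q μ ≤
            ∑ j ∈ (hJfin y).toFinset,
              K^2 * (μ (E j) ^ (1 / α.toReal - 1 / p.toReal - 1 / q.toReal) *
                eLpNorm ((E j).indicator f) q μ) := by
          calc μ (qball d y r) ^ (1 / α.toReal - 1 / p.toReal - 1 / q.toReal) *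
                eLpNorm ((qball d y r).indicator f) q μ
              ≤ μ (qball d y r) ^ (1 / α.toReal - 1 / p.toReal - 1 / q.toReal) *
                ∑ j ∈ (hJfin y).toFinset, eLpNorm ((E j).indicator f) q μ :=
                mul_le_mul_right (hdecomp y) _
          _ = ∑ j ∈ (hJfin y).toFinset,
                μ (qball d y r) ^ (1 / α.toReal - 1 / p.toReal - 1 / q.toReal) *
                eLpNorm ((E j).indicator f) q μ := Finset.mul_sum _ _ _
          _ ≤ ∑ j ∈ (hJfin y).toFinset,
                K^2 * (μ (E j) ^ (1 / α.toReal - 1 / p.toReal - 1 / q.toReal) *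
                  eLpNorm ((E j).indicator f) q μ) := by
              apply Finset.sum_le_sum
              intro j hj
              calc μ (qball d y r) ^ (1 / α.toReal - 1 / p.toReal - 1 / q.toReal) *
                    eLpNorm ((E j).indicator f) q μ
                  ≤ (K^2 * μ (E j) ^ (1 / α.toReal - 1 / p.toReal - 1 / q.toReal)) *
                    eLpNorm ((E j).indicator f) q μ :=
                  mul_le_mul_left (hcomp y j (hsubJ hj) _ he).1 _
              _ = K^2 * (μ (E j) ^ (1 / α.toReal - 1 / p.toReal - 1 / q.toReal) *
                    eLpNorm ((E j).indicator f) q μ) := by ring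
        calc (μ (qball d y r) ^ (1 / α.toReal - 1 / p.toReal - 1 / q.toReal) *
              eLpNorm ((qball d y r).indicator f) q μ) ^ p.toReal
            ≤ (∑ j ∈ (hJfin y).toFinset,
                K^2 * (μ (E j) ^ (1 / α.toReal - 1 / p.toReal - 1 / q.toReal) *
                  eLpNorm ((E j).indicator f) q μ)) ^ p.toReal :=
            ENNReal.rpow_le_rpow step1 hpb0.le
        _ ≤ (N : ℝ≥0∞) ^ p.toReal * ∑ j ∈ (hJfin y).toFinset,
              (K^2 * (μ (E j) ^ (1 / α.toReal - 1 / p.toReal - 1 / q.toReal) *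
                eLpNorm ((E j).indicator f) q μ)) ^ p.toReal :=
            sum_rpow_le _ _ hpb0 N (hcard y _ hsubJ)
        _ = (N : ℝ≥0∞) ^ p.toReal * ∑ j ∈ (hJfin y).toFinset,
              (K^2) ^ p.toReal * ((μ (E j) ^ (1 / α.toReal - 1 / p.toReal - 1 / q.toReal) *
                eLpNorm ((E j).indicator f) q μ)) ^ p.toReal := by
            congr 1
            apply Finset.sum_congr rfl
            intro j _
            exact ENNReal.mul_rpow_of_nonneg _ _ hpb0.le
        _ = ((N : ℝ≥0∞) * K^2) ^ p.toReal * ∑ j ∈ (hJfin y).toFinset,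
              ((μ (E j) ^ (1 / α.toReal - 1 / p.toReal - 1 / q.toReal) *
                eLpNorm ((E j).indicator f) q μ)) ^ p.toReal := by
            rw [← Finset.mul_sum, ← mul_assoc, ← ENNReal.mul_rpow_of_nonneg _ _ hpb0.le]
        _ ≤ ((N : ℝ≥0∞) * K^2) ^ p.toReal *
              ∑' j : ι, (qball d (c j) (2 * κ * r)).indicator
                (fun _ => (μ (E j) ^ (1 / α.toReal - 1 / p.toReal - 1 / q.toReal) *
                  eLpNorm ((E j).indicator f) q μ) ^ p.toReal) y := by
            apply mul_le_mul_right
            have hrw : ∑ j ∈ (hJfin y).toFinset,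
                ((μ (E j) ^ (1 / α.toReal - 1 / p.toReal - 1 / q.toReal) *
                  eLpNorm ((E j).indicator f) q μ)) ^ p.toReal =
                ∑ j ∈ (hJfin y).toFinset, (qball d (c j) (2 * κ * r)).indicator
                  (fun _ => (μ (E j) ^ (1 / α.toReal - 1 / p.toReal - 1 / q.toReal) *
                    eLpNorm ((E j).indicator f) q μ) ^ p.toReal) y := by
              apply Finset.sum_congr rfl
              intro j hj
              rw [Set.indicator_of_mem]
              exact hdc y j (hsubJ hj)
            rw [hrw]
            exact ENNReal.summable.sum_le_tsum _ (fun i _ => zero_le)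
      have hTsum : ∫⁻ y, (∑' j : ι, (qball d (c j) (2 * κ * r)).indicator
            (fun _ => (μ (E j) ^ (1 / α.toReal - 1 / p.toReal - 1 / q.toReal) *
              eLpNorm ((E j).indicator f) q μ) ^ p.toReal) y) ∂μ ≤
          K * ∑' j : ι, (μ (E j) ^ (1 / α.toReal - 1 / q.toReal) *
            eLpNorm ((E j).indicator f) q μ) ^ p.toReal := by
        rw [lintegral_tsum (fun j => (measurable_const.indicator (hmeas _ _)).aemeasurable)]
        rw [← ENNReal.tsum_mul_left]
        apply ENNReal.tsum_le_tsum
        intro j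
        rw [lintegral_indicator_const (hmeas _ _)]
        calc (μ (E j) ^ (1 / α.toReal - 1 / p.toReal - 1 / q.toReal) *
              eLpNorm ((E j).indicator f) q μ) ^ p.toReal * μ (qball d (c j) (2 * κ * r))
            ≤ (μ (E j) ^ (1 / α.toReal - 1 / p.toReal - 1 / q.toReal) *
              eLpNorm ((E j).indicator f) q μ) ^ p.toReal * (K * μ (E j)) :=
            mul_le_mul_right (hT j) _
        _ = K * ((μ (E j) ^ (1 / α.toReal - 1 / p.toReal - 1 / q.toReal) *
              eLpNorm ((E j).indicator f) q μ) ^ p.toReal * μ (E j)) := by ring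
        _ = K * (μ (E j) ^ (1 / α.toReal - 1 / q.toReal) *
              eLpNorm ((E j).indicator f) q μ) ^ p.toReal := by rw [hperj j]
      have hNK2top : ((N : ℝ≥0∞) * K^2) ^ p.toReal ≠ ∞ :=
        ENNReal.rpow_ne_top_of_nonneg hpb0.le
          (ENNReal.mul_ne_top (ENNReal.natCast_ne_top N) (ENNReal.pow_ne_top hKtop))
      calc (∫⁻ y, (μ (qball d y r) ^ (1 / α.toReal - 1 / p.toReal - 1 / q.toReal) *
            eLpNorm ((qball d y r).indicator f) q μ) ^ p.toReal ∂μ) ^ (1 / p.toReal)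
          ≤ (∫⁻ y, ((N : ℝ≥0∞) * K^2) ^ p.toReal *
              (∑' j : ι, (qball d (c j) (2 * κ * r)).indicator
                (fun _ => (μ (E j) ^ (1 / α.toReal - 1 / p.toReal - 1 / q.toReal) *
                  eLpNorm ((E j).indicator f) q μ) ^ p.toReal) y) ∂μ) ^ (1 / p.toReal) :=
          ENNReal.rpow_le_rpow (lintegral_mono hptA) (by positivity)
      _ = (((N : ℝ≥0∞) * K^2) ^ p.toReal * ∫⁻ y,
              (∑' j : ι, (qball d (c j) (2 * κ * r)).indicator
                (fun _ => (μ (E j) ^ (1 / α.toReal - 1 / p.toReal - 1 / q.toReal) *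
                  eLpNorm ((E j).indicator f) q μ) ^ p.toReal) y) ∂μ) ^ (1 / p.toReal) := by
            rw [lintegral_const_mul' _ _ hNK2top]
      _ ≤ (((N : ℝ≥0∞) * K^2) ^ p.toReal * (K * ∑' j : ι,
              (μ (E j) ^ (1 / α.toReal - 1 / q.toReal) *
                eLpNorm ((E j).indicator f) q μ) ^ p.toReal)) ^ (1 / p.toReal) :=
            ENNReal.rpow_le_rpow (mul_le_mul_right hTsum _) (by positivity)
      _ = (((N : ℝ≥0∞) * K^2) ^ p.toReal) ^ (1 / p.toReal) *
            ((K * ∑' j : ι, (μ (E j) ^ (1 / α.toReal - 1 / q.toReal) *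
              eLpNorm ((E j).indicator f) q μ) ^ p.toReal)) ^ (1 / p.toReal) :=
            ENNReal.mul_rpow_of_nonneg _ _ (by positivity)
      _ = ((N : ℝ≥0∞) * K^2) * (K ^ (1 / p.toReal) *
            (∑' j : ι, (μ (E j) ^ (1 / α.toReal - 1 / q.toReal) *
              eLpNorm ((E j).indicator f) q μ) ^ p.toReal) ^ (1 / p.toReal)) := by
            rw [← ENNReal.rpow_mul, mul_one_div_cancel hpb0.ne', ENNReal.rpow_one,
              ENNReal.mul_rpow_of_nonneg _ _ (by positivity : (0:ℝ) ≤ 1 / p.toReal)]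
      _ ≤ ((N : ℝ≥0∞) * K^2) * (K *
            (∑' j : ι, (μ (E j) ^ (1 / α.toReal - 1 / q.toReal) *
              eLpNorm ((E j).indicator f) q μ) ^ p.toReal) ^ (1 / p.toReal)) := by
            apply mul_le_mul_right
            apply mul_le_mul_left
            calc K ^ (1 / p.toReal) ≤ K ^ (1:ℝ) :=
                  ENNReal.rpow_le_rpow_of_exponent_le hK1 (by
                    rw [div_le_one hpb0]; exact hpb1)
            _ = K := ENNReal.rpow_one K
      _ = (N : ℝ≥0∞) * (K^2 * K) *
            (∑' j : ι, (μ (E j) ^ (1 / α.toReal - 1 / q.toReal) *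
              eLpNorm ((E j).indicator f) q μ) ^ p.toReal) ^ (1 / p.toReal) := by ring
  -- final assembly
  have hNC : (0:ℝ) < (N : ℝ) * C' ^ (3*L) := by positivity
  have h1 : ((N:ℝ≥0∞)) * (K^2 * K) = ENNReal.ofReal ((N : ℝ) * C' ^ (3*L)) := by
    rw [ENNReal.ofReal_mul (by positivity : (0:ℝ) ≤ (N:ℝ)), ENNReal.ofReal_natCast,
      ENNReal.ofReal_pow hC'0.le]
    congr 1
    rw [hKdef, show 3*L = L*3 from Nat.mul_comm 3 L, pow_mul]
    ring
  have hC2K : ENNReal.ofReal (C' ^ (2*L)) = K^2 := by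
    rw [ENNReal.ofReal_pow hC'0.le, show 2*L = L*2 from Nat.mul_comm 2 L, pow_mul, hKdef]
  constructor
  · calc ENNReal.ofReal (((N : ℝ) * C' ^ (3*L))⁻¹) * amalgamNorm μ d q p α r f
        ≤ ENNReal.ofReal (((N : ℝ) * C' ^ (3*L))⁻¹) *
          ((N:ℝ≥0∞) * (K^2 * K) * dyadicAmalgamNorm μ E q p α f) := mul_le_mul_right main1 _
    _ = (ENNReal.ofReal (((N : ℝ) * C' ^ (3*L))⁻¹) * ((N:ℝ≥0∞) * (K^2 * K))) *
          dyadicAmalgamNorm μ E q p α f := by ring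
    _ = 1 * dyadicAmalgamNorm μ E q p α f := by
        rw [h1, ← ENNReal.ofReal_mul (by positivity), inv_mul_cancel₀ hNC.ne',
          ENNReal.ofReal_one]
    _ = dyadicAmalgamNorm μ E q p α f := one_mul _
  · rw [hC2K]
    exact main2
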